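/- Let r be a probability mass function on S_A × S_B (a joint distribution of random variables a and b) with marginals r₁ on S_A and r₂ on S_B, and suppose SD(r, r₁ ⊗ r₂) ≤ ε. Let f : S_B → C be a (deterministic) function. Define a new joint pmf r' on S_B × S_A by r'(b, a') = r₂(b) · π_{f(b)}(a'), where for c ∈ C with P_r[f(b-component) = c] > 0, π_c(a') is the r-probability that the a-component equals a' conditioned on the event that f of the b-component equals c (i.e., a' is a fresh sample of a conditioned on the leakage c = f(b)). Then SD(r', r₂ ⊗ r₁) ≤ ε. -/

import Mathlib

open scoped ENNReal
set_option linter.unusedSectionVars false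
set_option maxHeartbeats 1000000

namespace SdResampleAux

open Classical in
noncomputable def m1 {SA SB : Type*} (r : SA × SB → ℝ) (a : SA) : ℝ := ∑' b, r (a, b)
open Classical in
noncomputable def m2 {SA SB : Type*} (r : SA × SB → ℝ) (b : SB) : ℝ := ∑' a, r (a, b)
noncomputable def gg {SA SB : Type*} (r : SA × SB → ℝ) (ab : SA × SB) : ℝ :=
  |r ab - m1 r ab.1 * m2 r ab.2|
open Classical in
noncomputable def qq {SA SB C : Type*} (r : SA × SB → ℝ) (f : SB → C) (b : SB) : ℝ :=
  ∑' ab : SA × SB, if f ab.2 = f b then r ab else 0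
open Classical in
noncomputable def NN {SA SB C : Type*} (r : SA × SB → ℝ) (f : SB → C) (ba : SB × SA) : ℝ :=
  ∑' b', if f b' = f ba.1 then r (ba.2, b') else 0
open Classical in
noncomputable def Mf {SA SB C : Type*} (r : SA × SB → ℝ) (f : SB → C) (ba : SB × SA) : ℝ :=
  ∑' b', if f b' = f ba.1 then gg r (ba.2, b') else 0
noncomputable def Qe {SA SB C : Type*} (r : SA × SB → ℝ) (f : SB → C) (b : SB) : ℝ≥0∞ :=
  ENNReal.ofReal (qq r f b)
open Classical in
noncomputable def MFe {SA SB C : Type*} (r : SA × SB → ℝ) (f : SB → C) (ba : SB × SA) : ℝ≥0∞ :=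
  ∑' b', if f b' = f ba.1 then ENNReal.ofReal (gg r (ba.2, b')) else 0

section lemmas

open Classical

variable {SA SB C : Type*}
variable (r : SA × SB → ℝ) (f : SB → C)
variable (hpos : ∀ ab, 0 ≤ r ab) (hsum : Summable r)

include hpos hsum

lemma hfib1 (a : SA) : Summable fun b => r (a, b) := hsum.prod_factor a

lemma hfib2 (b : SB) : Summable fun a => r (a, b) := hsum.prod_symm.prod_factor b

lemma hm1sum : Summable (m1 r) :=
  (hsum.hasSum.prod_fiberwise fun a => (hfib1 r hpos hsum a).hasSum).summable

lemma hm2sum : Summable (m2 r) :=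
  (hsum.prod_symm.hasSum.prod_fiberwise fun b => (hfib2 r hpos hsum b).hasSum).summable

lemma hm1nonneg (a : SA) : 0 ≤ m1 r a := tsum_nonneg fun b => hpos _

lemma hm2nonneg (b : SB) : 0 ≤ m2 r b := tsum_nonneg fun a => hpos _

lemma hprodsum : Summable fun ab : SA × SB => m1 r ab.1 * m2 r ab.2 :=
  (hm1sum r hpos hsum).mul_of_nonneg (hm2sum r hpos hsum)
    (fun a => hm1nonneg r hpos hsum a) (fun b => hm2nonneg r hpos hsum b)

lemma hggsum : Summable (gg r) := (hsum.sub (hprodsum r hpos hsum)).abs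

lemma hggnonneg (ab : SA × SB) : 0 ≤ gg r ab := abs_nonneg _

lemma hindsum (b : SB) : Summable fun ab : SA × SB => if f ab.2 = f b then r ab else 0 :=
  hsum.of_nonneg_of_le (fun ab => by split <;> [exact hpos _; exact le_rfl])
    (fun ab => by split <;> [exact le_rfl; exact hpos _])

lemma hqnonneg (b : SB) : 0 ≤ qq r f b :=
  tsum_nonneg fun ab => by split <;> [exact hpos _; exact le_rfl]

lemma Qfib (b0 : SB) :
    ∑' b, (if f b = f b0 then ENNReal.ofReal (m2 r b) else 0) = Qe r f b0 := by
  have h1 : Qe r f b0 = ∑' ab : SA × SB, (if f ab.2 = f b0 then ENNReal.ofReal (r ab) else 0) := by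
    rw [Qe, qq, ENNReal.ofReal_tsum_of_nonneg
      (fun ab => by split <;> [exact hpos _; exact le_rfl]) (hindsum r f hpos hsum b0)]
    exact tsum_congr fun ab => by split <;> simp
  rw [h1, ENNReal.tsum_prod', ENNReal.tsum_comm]
  refine tsum_congr fun b => ?_
  by_cases hb : f b = f b0
  · simp only [hb, if_true]
    rw [← ENNReal.ofReal_tsum_of_nonneg (fun a => hpos _) (hfib2 r hpos hsum b)]
    rfl
  · simp [hb]

lemma qq_zero_m2 (b : SB) (hq : qq r f b = 0) : m2 r b = 0 := by
  have hQ : Qe r f b = 0 := by rw [Qe, hq, ENNReal.ofReal_zero]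
  have hle : ENNReal.ofReal (m2 r b) ≤ Qe r f b := by
    rw [← Qfib r f hpos hsum b]
    have := ENNReal.le_tsum (f := fun b' => if f b' = f b then ENNReal.ofReal (m2 r b') else 0) b
    simpa using this
  rw [hQ, le_zero_iff, ENNReal.ofReal_eq_zero] at hle
  exact le_antisymm hle (hm2nonneg r hpos hsum b)

lemma qfib_real (b : SB) : qq r f b = ∑' b', if f b' = f b then m2 r b' else 0 := by
  have h1 := congrArg ENNReal.toReal (Qfib r f hpos hsum b)
  rw [ENNReal.tsum_toReal_eq (fun b' => by split <;> simp)] at h1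
  rw [Qe, ENNReal.toReal_ofReal (hqnonneg r f hpos hsum b)] at h1
  rw [← h1]
  exact tsum_congr fun b' => by
    split <;> simp [ENNReal.toReal_ofReal (hm2nonneg r hpos hsum _)]

lemma hMfsumf (ba : SB × SA) : Summable fun b' => if f b' = f ba.1 then gg r (ba.2, b') else 0 :=
  ((hggsum r hpos hsum).prod_factor ba.2).of_nonneg_of_le
    (fun b' => by split <;> [exact hggnonneg r hpos hsum _; exact le_rfl])
    (fun b' => by split <;> [exact le_rfl; exact hggnonneg r hpos hsum _])

lemma hMfnonneg (ba : SB × SA) : 0 ≤ Mf r f ba :=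
  tsum_nonneg fun b' => by split <;> [exact hggnonneg r hpos hsum _; exact le_rfl]

lemma pointwise (ba : SB × SA) :
    |m2 r ba.1 * (NN r f ba / qq r f ba.1) - m2 r ba.1 * m1 r ba.2| ≤
      (m2 r ba.1 / qq r f ba.1) * Mf r f ba := by
  obtain ⟨b, a'⟩ := ba
  rcases (hqnonneg r f hpos hsum b).eq_or_lt with hq | hq
  · have hm2z := qq_zero_m2 r f hpos hsum b hq.symm
    simp only [hm2z, zero_mul, sub_zero, abs_zero, zero_div]
    exact le_rfl
  · have hNsummable : Summable fun b' => if f b' = f b then r (a', b') else 0 :=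
      (hfib1 r hpos hsum a').of_nonneg_of_le
        (fun b' => by split <;> [exact hpos _; exact le_rfl])
        (fun b' => by split <;> [exact le_rfl; exact hpos _])
    have hN : HasSum (fun b' => if f b' = f b then r (a', b') else 0) (NN r f (b, a')) :=
      hNsummable.hasSum
    have hm2fib : Summable fun b' => if f b' = f b then m2 r b' else 0 :=
      (hm2sum r hpos hsum).of_nonneg_of_le
        (fun b' => by split <;> [exact hm2nonneg r hpos hsum _; exact le_rfl])
        (fun b' => by split <;> [exact le_rfl; exact hm2nonneg r hpos hsum _])
    have hq2 : HasSum (fun b' => if f b' = f b then m2 r b' else 0) (qq r f b) := by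
      rw [qfib_real r f hpos hsum b]; exact hm2fib.hasSum
    have heq : (fun b' => (if f b' = f b then m2 r b' else 0) * m1 r a')
        = fun b' => if f b' = f b then m1 r a' * m2 r b' else 0 := by
      funext b'; split <;> simp [mul_comm]
    have hq3 : HasSum (fun b' => if f b' = f b then m1 r a' * m2 r b' else 0)
        (qq r f b * m1 r a') := heq ▸ hq2.mul_right (m1 r a')
    have hdiff : NN r f (b, a') - qq r f b * m1 r a'
        = ∑' b', ((if f b' = f b then r (a', b') else 0)
            - (if f b' = f b then m1 r a' * m2 r b' else 0)) :=
      (hN.sub hq3).tsum_eq.symm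
    have hnormeq : (fun b' => ‖(if f b' = f b then r (a', b') else 0)
            - (if f b' = f b then m1 r a' * m2 r b' else 0)‖)
        = fun b' => if f b' = f b then gg r (a', b') else 0 := by
      funext b'
      by_cases hb : f b' = f b <;> simp [hb, gg, Real.norm_eq_abs]
    have habs : |NN r f (b, a') - qq r f b * m1 r a'| ≤ Mf r f (b, a') := by
      rw [hdiff]
      have hsm : Summable fun b' => ‖(if f b' = f b then r (a', b') else 0)
          - (if f b' = f b then m1 r a' * m2 r b' else 0)‖ := by
        rw [hnormeq]; exact hMfsumf r f hpos hsum (b, a')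
      calc |∑' b', ((if f b' = f b then r (a', b') else 0)
              - (if f b' = f b then m1 r a' * m2 r b' else 0))|
          ≤ ∑' b', ‖(if f b' = f b then r (a', b') else 0)
              - (if f b' = f b then m1 r a' * m2 r b' else 0)‖ := norm_tsum_le_tsum_norm hsm
        _ = Mf r f (b, a') := by rw [hnormeq]; rfl
    have hfrac : NN r f (b, a') / qq r f b - m1 r a'
        = (NN r f (b, a') - qq r f b * m1 r a') / qq r f b := by
      field_simp
    calc |m2 r b * (NN r f (b, a') / qq r f b) - m2 r b * m1 r a'|
        = m2 r b * |NN r f (b, a') / qq r f b - m1 r a'| := by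
          rw [← mul_sub, abs_mul, abs_of_nonneg (hm2nonneg r hpos hsum b)]
      _ = m2 r b * (|NN r f (b, a') - qq r f b * m1 r a'| / qq r f b) := by
          rw [hfrac, abs_div, abs_of_pos hq]
      _ ≤ m2 r b * (Mf r f (b, a') / qq r f b) := by
          gcongr
          exact hm2nonneg r hpos hsum b
      _ = (m2 r b / qq r f b) * Mf r f (b, a') := by ring

lemma chain :
    ∑' ba : SB × SA, (ENNReal.ofReal (m2 r ba.1) / Qe r f ba.1) * MFe r f ba ≤
      ENNReal.ofReal (∑' ab, gg r ab) := by
  have hQcongr : ∀ b b'', f b = f b'' → Qe r f b = Qe r f b'' := by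
    intro b b'' hb
    simp only [Qe, qq, hb]
  calc ∑' ba : SB × SA, (ENNReal.ofReal (m2 r ba.1) / Qe r f ba.1) * MFe r f ba
      = ∑' b, ∑' a', ∑' b', (if f b' = f b then
          (ENNReal.ofReal (m2 r b) / Qe r f b) * ENNReal.ofReal (gg r (a', b')) else 0) := by
        rw [ENNReal.tsum_prod']
        refine tsum_congr fun b => tsum_congr fun a' => ?_
        rw [MFe, ← ENNReal.tsum_mul_left]
        exact tsum_congr fun b' => by split <;> simp
    _ = ∑' a', ∑' b', ∑' b, (if f b' = f b then
          (ENNReal.ofReal (m2 r b) / Qe r f b) * ENNReal.ofReal (gg r (a', b')) else 0) := by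
        rw [ENNReal.tsum_comm]
        exact tsum_congr fun a' => ENNReal.tsum_comm
    _ ≤ ∑' a', ∑' b', ENNReal.ofReal (gg r (a', b')) := by
        refine ENNReal.tsum_le_tsum fun a' => ENNReal.tsum_le_tsum fun b' => ?_
        calc ∑' b, (if f b' = f b then
              (ENNReal.ofReal (m2 r b) / Qe r f b) * ENNReal.ofReal (gg r (a', b')) else 0)
            = ENNReal.ofReal (gg r (a', b')) *
                ∑' b, (if f b' = f b then ENNReal.ofReal (m2 r b) / Qe r f b else 0) := by
              rw [← ENNReal.tsum_mul_left]
              exact tsum_congr fun b => by split <;> simp [mul_comm]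
          _ = ENNReal.ofReal (gg r (a', b')) *
                ((∑' b, (if f b = f b' then ENNReal.ofReal (m2 r b) else 0)) / Qe r f b') := by
              congr 1
              have h1 : (fun b => if f b' = f b then ENNReal.ofReal (m2 r b) / Qe r f b else 0)
                  = fun b => (if f b = f b' then ENNReal.ofReal (m2 r b) else 0) / Qe r f b' := by
                funext b
                by_cases hb : f b = f b'
                · rw [if_pos hb.symm, if_pos hb, hQcongr b b' hb]
                · rw [if_neg (fun hc => hb hc.symm), if_neg hb, ENNReal.zero_div]
              rw [h1]
              simp only [div_eq_mul_inv, ENNReal.tsum_mul_right]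
          _ ≤ ENNReal.ofReal (gg r (a', b')) * 1 := by
              gcongr
              rw [Qfib r f hpos hsum b']
              exact ENNReal.div_self_le_one
          _ = ENNReal.ofReal (gg r (a', b')) := mul_one _
    _ = ∑' ab : SA × SB, ENNReal.ofReal (gg r ab) :=
        (ENNReal.tsum_prod' (f := fun ab : SA × SB => ENNReal.ofReal (gg r ab))).symm
    _ = ENNReal.ofReal (∑' ab, gg r ab) :=
        (ENNReal.ofReal_tsum_of_nonneg (hggnonneg r hpos hsum) (hggsum r hpos hsum)).symm

lemma sd_aux :
    ∑' ba : SB × SA, |m2 r ba.1 * (NN r f ba / qq r f ba.1) - m2 r ba.1 * m1 r ba.2|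
      ≤ ∑' ab : SA × SB, gg r ab := by
  have hMFe : ∀ ba : SB × SA, ENNReal.ofReal (Mf r f ba) = MFe r f ba := by
    intro ba
    rw [Mf, MFe, ENNReal.ofReal_tsum_of_nonneg
      (fun b' => by split <;> [exact hggnonneg r hpos hsum _; exact le_rfl])
      (hMfsumf r f hpos hsum ba)]
    exact tsum_congr fun b' => by split <;> simp
  have key : ∑' ba : SB × SA,
      ENNReal.ofReal |m2 r ba.1 * (NN r f ba / qq r f ba.1) - m2 r ba.1 * m1 r ba.2|
      ≤ ENNReal.ofReal (∑' ab, gg r ab) := by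
    calc ∑' ba : SB × SA,
        ENNReal.ofReal |m2 r ba.1 * (NN r f ba / qq r f ba.1) - m2 r ba.1 * m1 r ba.2|
        ≤ ∑' ba : SB × SA, (ENNReal.ofReal (m2 r ba.1) / Qe r f ba.1) * MFe r f ba := by
          refine ENNReal.tsum_le_tsum fun ba => ?_
          refine le_trans (ENNReal.ofReal_le_ofReal (pointwise r f hpos hsum ba)) ?_
          rw [ENNReal.ofReal_mul (div_nonneg (hm2nonneg r hpos hsum ba.1)
            (hqnonneg r f hpos hsum ba.1)), hMFe ba]
          gcongr
          rcases (hqnonneg r f hpos hsum ba.1).eq_or_lt with hq | hq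
          · rw [← hq, div_zero, ENNReal.ofReal_zero]
            exact zero_le
          · rw [ENNReal.ofReal_div_of_pos hq]
            exact le_rfl
      _ ≤ ENNReal.ofReal (∑' ab, gg r ab) := chain r f hpos hsum
  have hne : (∑' ba : SB × SA,
      ENNReal.ofReal |m2 r ba.1 * (NN r f ba / qq r f ba.1) - m2 r ba.1 * m1 r ba.2|) ≠ ⊤ :=
    (key.trans_lt ENNReal.ofReal_lt_top).ne
  have heq : ∑' ba : SB × SA, |m2 r ba.1 * (NN r f ba / qq r f ba.1) - m2 r ba.1 * m1 r ba.2|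
      = (∑' ba : SB × SA,
        ENNReal.ofReal |m2 r ba.1 * (NN r f ba / qq r f ba.1) - m2 r ba.1 * m1 r ba.2|).toReal := by
    rw [ENNReal.tsum_toReal_eq (fun ba => ENNReal.ofReal_ne_top)]
    exact tsum_congr fun ba => (ENNReal.toReal_ofReal (abs_nonneg _)).symm
  rw [heq]
  calc (∑' ba : SB × SA,
      ENNReal.ofReal |m2 r ba.1 * (NN r f ba / qq r f ba.1) - m2 r ba.1 * m1 r ba.2|).toReal
      ≤ (ENNReal.ofReal (∑' ab, gg r ab)).toReal :=
        ENNReal.toReal_mono ENNReal.ofReal_ne_top key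
    _ = ∑' ab, gg r ab := ENNReal.toReal_ofReal
        (tsum_nonneg fun ab => hggnonneg r hpos hsum ab)

end lemmas
end SdResampleAux



/-- Statistical distance between two (real-valued) mass functions. -/
noncomputable def SD {S : Type*} (p q : S → ℝ) : ℝ := (1 / 2) * ∑' s, |p s - q s|

/-- `p` is a probability mass function: pointwise nonnegative and summing to 1. -/
def IsPMF {S : Type*} (p : S → ℝ) : Prop := (∀ s, 0 ≤ p s) ∧ HasSum p 1

/-- deterministic case of Lemma `stillProd`: let `r` be a joint pmf of
`(a, b)` on `SA × SB`, `ε`-close to the product of its marginals `r₁ ⊗ r₂`.  For a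
deterministic leakage `f : SB → C`, define `r'(b, a') = r₂(b) · π_{f(b)}(a')`, where
`π_c(a')` is the `r`-probability that the `a`-component equals `a'` conditioned on `f` of
the `b`-component being `c`.  Then `SD(r', r₂ ⊗ r₁) ≤ ε`. -/
theorem sd_resample_given_leakage {SA SB C : Type*} [Countable SA] [Countable SB]
    (r : SA × SB → ℝ) (hr : IsPMF r) (ε : ℝ)
    (h : SD r (fun ab => (∑' b, r (ab.1, b)) * (∑' a, r (a, ab.2))) ≤ ε)
    (f : SB → C) :
    SD (fun ba : SB × SA =>
          (∑' a, r (a, ba.1)) *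
            ((∑' b, {b' : SB | f b' = f ba.1}.indicator (fun b' => r (ba.2, b')) b) /
             (∑' ab, {ab' : SA × SB | f ab'.2 = f ba.1}.indicator r ab)))
       (fun ba : SB × SA => (∑' a, r (a, ba.1)) * (∑' b, r (ba.2, b))) ≤ ε := by
  obtain ⟨hpos, hsum1⟩ := hr
  have hsum : Summable r := hsum1.summable
  have aux := SdResampleAux.sd_aux r f hpos hsum
  unfold SD at h ⊢
  have hL : (fun ba : SB × SA =>
        |(∑' a, r (a, ba.1)) *
            ((∑' b, {b' : SB | f b' = f ba.1}.indicator (fun b' => r (ba.2, b')) b) /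
             (∑' ab, {ab' : SA × SB | f ab'.2 = f ba.1}.indicator r ab)) -
          (∑' a, r (a, ba.1)) * (∑' b, r (ba.2, b))|)
      = fun ba : SB × SA =>
        |SdResampleAux.m2 r ba.1 * (SdResampleAux.NN r f ba / SdResampleAux.qq r f ba.1)
          - SdResampleAux.m2 r ba.1 * SdResampleAux.m1 r ba.2| := by
    funext ba
    have h1 : (∑' a, r (a, ba.1)) = SdResampleAux.m2 r ba.1 := rfl
    have h2 : (∑' b, r (ba.2, b)) = SdResampleAux.m1 r ba.2 := rfl
    have h3 : (∑' b, {b' : SB | f b' = f ba.1}.indicator (fun b' => r (ba.2, b')) b)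
        = SdResampleAux.NN r f ba := by
      simp only [SdResampleAux.NN]
      refine tsum_congr fun b => ?_
      by_cases hb : f b = f ba.1
      · rw [Set.indicator_of_mem (show b ∈ {b' : SB | f b' = f ba.1} from hb), if_pos hb]
      · rw [Set.indicator_of_notMem (show b ∉ {b' : SB | f b' = f ba.1} from hb), if_neg hb]
    have h4 : (∑' ab, {ab' : SA × SB | f ab'.2 = f ba.1}.indicator r ab)
        = SdResampleAux.qq r f ba.1 := by
      simp only [SdResampleAux.qq]
      refine tsum_congr fun ab => ?_
      by_cases hab : f ab.2 = f ba.1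
      · rw [Set.indicator_of_mem (show ab ∈ {ab' : SA × SB | f ab'.2 = f ba.1} from hab), if_pos hab]
      · rw [Set.indicator_of_notMem (show ab ∉ {ab' : SA × SB | f ab'.2 = f ba.1} from hab), if_neg hab]
    rw [h1, h2, h3, h4]
  rw [hL]
  have hg : (∑' ab : SA × SB, SdResampleAux.gg r ab)
      = ∑' ab : SA × SB, |r ab - (∑' b, r (ab.1, b)) * (∑' a, r (a, ab.2))| := rfl
  rw [hg] at aux
  linarith [aux]
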